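/- Let (Ω,σ) be a probability space, c : Ω → ℝ measurable, λ, μ ∈ ℝ with μ > 0, and set u₀ = A/sqrt(1+A²) where A = (c - λ)/μ. Then for every measurable u : Ω → ℝ with |u| ≤ 1 a.e., ∫ u₀ dσ = ∫ u dσ, and ∫ sqrt(1-u₀²) dσ ≤ ∫ sqrt(1-u²) dσ, one has ∫ c·u₀ dσ ≥ ∫ c·u dσ, with equality if and only if u = u₀ almost everywhere. -/

import Mathlib

open MeasureTheory

lemma aux_s_pos (A : ℝ) : 0 < Real.sqrt (1 + A^2) := Real.sqrt_pos.2 (by positivity)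

lemma aux_sq (A : ℝ) : (Real.sqrt (1 + A^2))^2 = 1 + A^2 := Real.sq_sqrt (by positivity)

lemma aux_le (A x : ℝ) (hx : |x| ≤ 1) :
    A * x + Real.sqrt (1 - x^2) ≤ Real.sqrt (1 + A^2) := by
  have hx2 : x^2 ≤ 1 := by nlinarith [abs_nonneg x, sq_abs x, abs_le.1 hx]
  set t := Real.sqrt (1 - x^2) with ht
  have ht0 : 0 ≤ t := Real.sqrt_nonneg _
  have ht2 : t^2 = 1 - x^2 := Real.sq_sqrt (by linarith)
  set s := Real.sqrt (1 + A^2) with hs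
  have hs0 : 0 < s := aux_s_pos A
  have hs2 : s^2 = 1 + A^2 := aux_sq A
  nlinarith [sq_nonneg (A*t - x), sq_nonneg (A*x + t - s), sq_nonneg (A*x + t + s)]

lemma aux_eq (A x : ℝ) (hx : |x| ≤ 1)
    (h : A * x + Real.sqrt (1 - x^2) = Real.sqrt (1 + A^2)) :
    x = A / Real.sqrt (1 + A^2) := by
  have hx2 : x^2 ≤ 1 := by nlinarith [abs_nonneg x, sq_abs x, abs_le.1 hx]
  set t := Real.sqrt (1 - x^2) with ht
  have ht0 : 0 ≤ t := Real.sqrt_nonneg _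
  have ht2 : t^2 = 1 - x^2 := Real.sq_sqrt (by linarith)
  set s := Real.sqrt (1 + A^2) with hs
  have hs0 : 0 < s := aux_s_pos A
  have hs2 : s^2 = 1 + A^2 := aux_sq A
  have hz : (A - s*x)^2 = 0 := by nlinarith
  have : A = s * x := by nlinarith [sq_nonneg (A - s*x)]
  field_simp [this, hs0.ne']
  linear_combination -this

lemma aux_abs (A : ℝ) : |A / Real.sqrt (1 + A^2)| ≤ 1 := by
  have hs0 : 0 < Real.sqrt (1 + A^2) := aux_s_pos A
  have hs2 : (Real.sqrt (1 + A^2))^2 = 1 + A^2 := aux_sq A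
  rw [abs_div, abs_of_pos hs0, div_le_one hs0]
  nlinarith [abs_nonneg A, sq_abs A]

lemma aux_u0 (A : ℝ) :
    A * (A / Real.sqrt (1 + A^2)) + Real.sqrt (1 - (A / Real.sqrt (1 + A^2))^2)
      = Real.sqrt (1 + A^2) := by
  set s := Real.sqrt (1 + A^2) with hs
  have hs0 : 0 < s := aux_s_pos A
  have hs2 : s^2 = 1 + A^2 := aux_sq A
  have h1 : 1 - (A / s)^2 = (1/s)^2 := by
    field_simp
    nlinarith
  rw [h1, Real.sqrt_sq (by positivity)]
  field_simp
  nlinarith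

/-- Core variational lemma (case `b > 0`): with `A = (c - l)/μ` (`μ > 0`) and
`u₀ = A/√(1+A²)`, for every measurable `u` with `|u| ≤ 1` a.e., `∫ u₀ = ∫ u` and
`∫ √(1-u₀²) ≤ ∫ √(1-u²)`, one has `∫ c u₀ ≥ ∫ c u`, with equality iff `u = u₀` a.e. -/
theorem variational_lemma_b_pos (Ω : Type*) [MeasurableSpace Ω] (σ : Measure Ω)
    [IsProbabilityMeasure σ] (c : Ω → ℝ) (hc : Measurable c) (M : ℝ) (hcbd : ∀ ω, |c ω| ≤ M)
    (l μ : ℝ) (hμ : 0 < μ)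
    (u₀ : Ω → ℝ) (hu₀ : ∀ ω, u₀ ω = ((c ω - l) / μ) / Real.sqrt (1 + ((c ω - l) / μ) ^ 2))
    (u : Ω → ℝ) (hu : Measurable u) (hu1 : ∀ᵐ ω ∂σ, |u ω| ≤ 1)
    (hmean : ∫ ω, u₀ ω ∂σ = ∫ ω, u ω ∂σ)
    (hsqrt : ∫ ω, Real.sqrt (1 - u₀ ω ^ 2) ∂σ ≤ ∫ ω, Real.sqrt (1 - u ω ^ 2) ∂σ) :
    (∫ ω, c ω * u ω ∂σ ≤ ∫ ω, c ω * u₀ ω ∂σ) ∧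
    (∫ ω, c ω * u₀ ω ∂σ = ∫ ω, c ω * u ω ∂σ ↔ u =ᵐ[σ] u₀) := by
  set A : Ω → ℝ := fun ω => (c ω - l) / μ with hA
  -- measurability of u₀
  have hu₀fun : u₀ = fun ω => A ω / Real.sqrt (1 + A ω ^ 2) := funext hu₀
  have hAm : Measurable A := (hc.sub measurable_const).div_const μ
  have hu₀m : Measurable u₀ := by
    rw [hu₀fun]
    exact hAm.div ((Real.continuous_sqrt.measurable).comp
      ((measurable_const.add (hAm.pow_const 2))))
  have hu₀bd : ∀ ω, |u₀ ω| ≤ 1 := fun ω => by rw [hu₀ ω]; exact aux_abs _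
  -- generic integrability helper
  have intbd : ∀ (f : Ω → ℝ) (C : ℝ), Measurable f → (∀ᵐ ω ∂σ, |f ω| ≤ C) →
      Integrable f σ := by
    intro f C hf hbd
    exact (integrable_const C).mono' hf.aestronglyMeasurable
      (by filter_upwards [hbd] with ω h using by simpa [Real.norm_eq_abs] using h)
  have sqrtmeas : ∀ (f : Ω → ℝ), Measurable f →
      Measurable (fun ω => Real.sqrt (1 - f ω ^ 2)) := fun f hf =>
    Real.continuous_sqrt.measurable.comp (measurable_const.sub (hf.pow_const 2))
  have sqrtbd : ∀ x : ℝ, |Real.sqrt (1 - x ^ 2)| ≤ 1 := by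
    intro x
    rw [abs_of_nonneg (Real.sqrt_nonneg _)]
    nlinarith [Real.sq_sqrt (le_max_right (1 - x^2) 0), Real.sqrt_nonneg (1 - x^2),
      Real.sqrt_le_sqrt (show (1:ℝ) - x^2 ≤ 1 by nlinarith [sq_nonneg x]),
      Real.sqrt_one]
  have i_u : Integrable u σ := intbd u 1 hu hu1
  have i_u₀ : Integrable u₀ σ := intbd u₀ 1 hu₀m (Filter.Eventually.of_forall hu₀bd)
  have i_cu : Integrable (fun ω => c ω * u ω) σ := by
    refine intbd _ (|M|) (hc.mul hu) ?_
    filter_upwards [hu1] with ω h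
    rw [abs_mul]
    nlinarith [abs_nonneg (c ω), abs_nonneg (u ω), hcbd ω, le_abs_self M]
  have i_cu₀ : Integrable (fun ω => c ω * u₀ ω) σ := by
    refine intbd _ (|M|) (hc.mul hu₀m) (Filter.Eventually.of_forall fun ω => ?_)
    rw [abs_mul]
    nlinarith [abs_nonneg (c ω), abs_nonneg (u₀ ω), hu₀bd ω, hcbd ω, le_abs_self M]
  have i_s₀ : Integrable (fun ω => Real.sqrt (1 - u₀ ω ^ 2)) σ :=
    intbd _ 1 (sqrtmeas u₀ hu₀m) (Filter.Eventually.of_forall fun ω => sqrtbd _)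
  have i_su : Integrable (fun ω => Real.sqrt (1 - u ω ^ 2)) σ :=
    intbd _ 1 (sqrtmeas u hu) (Filter.Eventually.of_forall fun ω => sqrtbd _)
  -- the nonnegative function g
  set g : Ω → ℝ := fun ω =>
    (c ω * u₀ ω - l * u₀ ω + μ * Real.sqrt (1 - u₀ ω ^ 2)) -
    (c ω * u ω - l * u ω + μ * Real.sqrt (1 - u ω ^ 2)) with hg
  have i_g : Integrable g σ := by
    apply Integrable.sub
    · exact ((i_cu₀.sub (i_u₀.const_mul l)).add (i_s₀.const_mul μ))
    · exact ((i_cu.sub (i_u.const_mul l)).add (i_su.const_mul μ))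
  -- pointwise identity for u₀-part: c u₀ - l u₀ + μ √(1-u₀²) = μ √(1+A²)
  have hid₀ : ∀ ω, c ω * u₀ ω - l * u₀ ω + μ * Real.sqrt (1 - u₀ ω ^ 2)
      = μ * Real.sqrt (1 + A ω ^ 2) := by
    intro ω
    have h := aux_u0 (A ω)
    have hμA : μ * A ω = c ω - l := by
      simp only [hA]; field_simp
    rw [hu₀ ω]
    have h2 : c ω * (A ω / Real.sqrt (1 + A ω ^ 2)) - l * (A ω / Real.sqrt (1 + A ω ^ 2))
        = μ * (A ω * (A ω / Real.sqrt (1 + A ω ^ 2))) := by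
      linear_combination (-(A ω / Real.sqrt (1 + A ω ^ 2))) * hμA
    rw [h2]
    nlinarith [h]
  have hidu : ∀ ω, c ω * u ω - l * u ω + μ * Real.sqrt (1 - u ω ^ 2)
      = μ * (A ω * u ω + Real.sqrt (1 - u ω ^ 2)) := by
    intro ω
    have hμA : μ * A ω = c ω - l := by simp only [hA]; field_simp
    linear_combination (-(u ω)) * hμA
  have hg_nonneg : ∀ᵐ ω ∂σ, 0 ≤ g ω := by
    filter_upwards [hu1] with ω hω
    simp only [hg, hid₀ ω, hidu ω]
    have := aux_le (A ω) (u ω) hω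
    nlinarith
  -- value of ∫ g
  have hgint : ∫ ω, g ω ∂σ = (∫ ω, c ω * u₀ ω ∂σ - ∫ ω, c ω * u ω ∂σ)
      + μ * (∫ ω, Real.sqrt (1 - u₀ ω ^ 2) ∂σ - ∫ ω, Real.sqrt (1 - u ω ^ 2) ∂σ) := by
    have i_lu₀ : Integrable (fun ω => l * u₀ ω) σ := by exact i_u₀.const_mul l
    have i_lu : Integrable (fun ω => l * u ω) σ := by exact i_u.const_mul l
    have i_ms₀ : Integrable (fun ω => μ * Real.sqrt (1 - u₀ ω ^ 2)) σ := by
      exact i_s₀.const_mul μ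
    have i_msu : Integrable (fun ω => μ * Real.sqrt (1 - u ω ^ 2)) σ := by
      exact i_su.const_mul μ
    have i_a₀ : Integrable (fun ω => c ω * u₀ ω - l * u₀ ω) σ := by exact i_cu₀.sub i_lu₀
    have i_au : Integrable (fun ω => c ω * u ω - l * u ω) σ := by exact i_cu.sub i_lu
    have i_b₀ : Integrable (fun ω => c ω * u₀ ω - l * u₀ ω + μ * Real.sqrt (1 - u₀ ω ^ 2)) σ :=
      by exact i_a₀.add i_ms₀
    have i_bu : Integrable (fun ω => c ω * u ω - l * u ω + μ * Real.sqrt (1 - u ω ^ 2)) σ :=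
      by exact i_au.add i_msu
    simp only [hg]
    rw [integral_sub i_b₀ i_bu, integral_add i_a₀ i_ms₀, integral_add i_au i_msu,
      integral_sub i_cu₀ i_lu₀, integral_sub i_cu i_lu,
      integral_const_mul, integral_const_mul, integral_const_mul, integral_const_mul,
      hmean]
    ring
  have hg0 : 0 ≤ ∫ ω, g ω ∂σ := integral_nonneg_of_ae hg_nonneg
  have hmain : ∫ ω, c ω * u ω ∂σ ≤ ∫ ω, c ω * u₀ ω ∂σ := by nlinarith [hgint, hg0, hsqrt]
  refine ⟨hmain, ?_, ?_⟩
  · -- equality ⇒ u = u₀ a.e.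
    intro heq
    have hgle : ∫ ω, g ω ∂σ ≤ 0 := by nlinarith [hgint, hsqrt]
    have hgz : ∫ ω, g ω ∂σ = 0 := le_antisymm hgle hg0
    have hgz' : g =ᵐ[σ] 0 :=
      ((integral_eq_zero_iff_of_nonneg_ae hg_nonneg i_g).mp hgz)
    filter_upwards [hgz', hu1] with ω hω hω1
    have h0 : g ω = 0 := hω
    have heqω : A ω * u ω + Real.sqrt (1 - u ω ^ 2) = Real.sqrt (1 + A ω ^ 2) := by
      have h1 := hid₀ ω
      have h2 := hidu ω
      simp only [hg] at h0
      have := aux_le (A ω) (u ω) hω1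
      nlinarith
    rw [hu₀ ω]
    exact aux_eq (A ω) (u ω) hω1 heqω
  · -- u = u₀ a.e. ⇒ equality
    intro heq
    exact (integral_congr_ae (by filter_upwards [heq] with ω h using by rw [h])).symm
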